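/- For every ξ ∈ (0,∞) and every v ∈ 𝒩 with χ_ξ·v ≠ 0 in L², one has F_ξ(v) > 0. Consequently the largest eigenvalue λ_ξ of A_ξ on the odd functions in L²(ℝ) is strictly positive. -/

import Mathlib

open MeasureTheory Filter Set

noncomputable section

/-- Convolution of two real functions on `ℝ`: `(a ∗ w)(x) = ∫ a(x − y) w(y) dy`. -/
def conv (a w : ℝ → ℝ) : ℝ → ℝ := fun x => ∫ y, a (x - y) * w y

/-- `χ_ξ`, the indicator function of the interval `I_ξ = [−ξ, ξ]`. -/
def chi (ξ : ℝ) : ℝ → ℝ := Set.indicator (Set.Icc (-ξ) ξ) (fun _ => (1 : ℝ))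

/-- The modified convolution operator `A_ξ v := χ_ξ · (a ∗ (χ_ξ · v))`. -/
def Axi (a : ℝ → ℝ) (ξ : ℝ) (v : ℝ → ℝ) : ℝ → ℝ :=
  fun x => chi ξ x * conv a (fun y => chi ξ y * v y) x

/-- The quadratic functional `F_ξ(v) := ½ ⟨χ_ξ·v, a ∗ (χ_ξ·v)⟩` in `L²(ℝ)`. -/
def Fxi (a : ℝ → ℝ) (ξ : ℝ) (v : ℝ → ℝ) : ℝ :=
  (1 / 2) * ∫ x, (chi ξ x * v x) * conv a (fun y => chi ξ y * v y) x

/-- Standing assumptions on the convolution kernel `a`: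
integrable, square integrable, bounded, even, nonnegative, nonincreasing on `[0,∞)`,
with total integral one. -/
structure KernelHyp (a : ℝ → ℝ) : Prop where
  integrable : Integrable a
  memL2 : MemLp a 2 volume
  bounded : ∃ C : ℝ, ∀ x, |a x| ≤ C
  even : ∀ x, a (-x) = a x
  nonneg : ∀ x, 0 ≤ a x
  antitone : AntitoneOn a (Set.Ici 0)
  mass_one : (∫ x, a x) = 1

/-- Strict unimodality: `a` is differentiable with `a′(x) < 0` for all `x > 0`. -/
def StrictKernel (a : ℝ → ℝ) : Prop :=
  Differentiable ℝ a ∧ ∀ x, 0 < x → deriv a x < 0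

/-- The cone `𝒰` of even, nonnegative, unimodal functions in `L²(ℝ)`. -/
def coneU (u : ℝ → ℝ) : Prop :=
  MemLp u 2 volume ∧ (∀ x, u (-x) = u x) ∧ (∀ x, 0 ≤ u x) ∧
    AntitoneOn u (Set.Ici 0)

/-- The cone `𝒩` of odd functions in `L²(ℝ)` that are nonpositive on `(0,∞)`. -/
def coneN (v : ℝ → ℝ) : Prop :=
  MemLp v 2 volume ∧ (∀ x, v (-x) = -v x) ∧ ∀ x, 0 < x → v x ≤ 0

/-- The refined cone `𝒩̃_ξ`: elements of `𝒩` that are `C¹` on `I_ξ`, with negative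
derivative at `0`, strictly negative on `(0, ξ]` and vanishing beyond `ξ`. -/
def coneNtilde (ξ : ℝ) (v : ℝ → ℝ) : Prop :=
  coneN v ∧ ContDiffOn ℝ 1 v (Set.Icc (-ξ) ξ) ∧ deriv v 0 < 0 ∧
    (∀ x, 0 < x → x ≤ ξ → v x < 0) ∧ ∀ x, ξ < x → v x = 0

/-- The set of Rayleigh quotients `2 F_ξ(v)` over normalized odd `v ∈ L²(ℝ)`. -/
def rayleighSet (a : ℝ → ℝ) (ξ : ℝ) : Set ℝ :=
  {l | ∃ v : ℝ → ℝ, MemLp v 2 volume ∧ (∀ x, v (-x) = -v x) ∧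
    (∫ x, (v x) ^ 2) = 1 ∧ l = 2 * Fxi a ξ v}

/-- `λ_ξ`, the largest eigenvalue of `A_ξ` on `L²_odd(ℝ)`, characterized variationally
as the supremum of the Rayleigh quotients. -/
def lamXi (a : ℝ → ℝ) (ξ : ℝ) : ℝ := sSup (rayleighSet a ξ)

/-- `convPow a k` is the `(k+1)`-fold convolution power `a^{∗(k+1)}`. -/
def convPow (a : ℝ → ℝ) : ℕ → (ℝ → ℝ)
  | 0 => a
  | (k + 1) => conv a (convPow a k)

/-- The transformed kernel `ã := (1 − μ) Σ_{k≥0} μ^k a^{∗(k+1)}`. -/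
def tildeKernel (a : ℝ → ℝ) (μ : ℝ) : ℝ → ℝ :=
  fun x => (1 - μ) * ∑' k : ℕ, μ ^ k * convPow a k x

/-- The bilinear nonlinearity `f(r) = ζ r + η max(r − θ, 0)`. -/
def bilin (ζ θ η r : ℝ) : ℝ := ζ * r + η * max (r - θ) 0

section aux

lemma chi_nonneg (ξ x : ℝ) : 0 ≤ chi ξ x := by
  unfold chi; exact Set.indicator_nonneg (fun _ _ => zero_le_one) x

lemma chi_le_one (ξ x : ℝ) : chi ξ x ≤ 1 := by
  unfold chi; exact Set.indicator_le_self' (fun _ _ => zero_le_one) x |>.trans (by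
    by_cases h : x ∈ Set.Icc (-ξ) ξ <;> simp [Set.indicator, h])

lemma chi_even (ξ x : ℝ) : chi ξ (-x) = chi ξ x := by
  unfold chi
  have : (-x ∈ Set.Icc (-ξ) ξ) = (x ∈ Set.Icc (-ξ) ξ) := by
    simp only [Set.mem_Icc, eq_iff_iff]
    constructor <;> (rintro ⟨h1, h2⟩; constructor <;> linarith)
  simp only [Set.indicator, this]

lemma chi_measurable (ξ : ℝ) : Measurable (chi ξ) :=
  measurable_const.indicator measurableSet_Icc

lemma chi_memℒp (ξ : ℝ) : MemLp (chi ξ) 2 volume := by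
  unfold chi
  exact memLp_indicator_const 2 measurableSet_Icc 1 (Or.inr (by
    rw [Real.volume_Icc]; exact ENNReal.ofReal_ne_top))

lemma w_integrable {ξ : ℝ} {v : ℝ → ℝ} (hv : MemLp v 2 volume) :
    Integrable (fun x => chi ξ x * v x) := by
  have h := (hv.smul (chi_memℒp ξ) (p := 2) (q := 2) (r := 1))
  rw [← memLp_one_iff_integrable]
  exact h

end aux

variable {a : ℝ → ℝ} {C : ℝ}

lemma conv_cont (ha : Continuous a) (hC : ∀ x, |a x| ≤ C)
    {w : ℝ → ℝ} (hw : Integrable w) : Continuous (conv a w) := by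
  unfold conv
  apply continuous_of_dominated (bound := fun y => C * |w y|)
  · intro x
    exact ((ha.comp (continuous_const.sub continuous_id)).aestronglyMeasurable.mul
      hw.aestronglyMeasurable)
  · intro x
    filter_upwards with y
    rw [norm_mul]
    exact mul_le_mul_of_nonneg_right (hC _) (abs_nonneg _) |>.trans_eq rfl
  · exact hw.norm.const_mul C
  · filter_upwards with y
    exact (ha.comp (continuous_id.sub continuous_const)).mul continuous_const

lemma conv_bound (hC : ∀ x, |a x| ≤ C) {w : ℝ → ℝ} (hw : Integrable w) (x : ℝ) :
    |conv a w x| ≤ C * ∫ y, |w y| := by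
  unfold conv
  calc |∫ y, a (x - y) * w y| ≤ ∫ y, |a (x - y) * w y| := by
        have := norm_integral_le_integral_norm (μ := volume) (fun y => a (x - y) * w y)
        simpa only [Real.norm_eq_abs] using this
    _ ≤ ∫ y, C * |w y| := by
        apply integral_mono_of_nonneg
        · filter_upwards with y; positivity
        · exact hw.norm.const_mul C
        · filter_upwards with y
          rw [abs_mul]
          exact mul_le_mul_of_nonneg_right (hC _) (abs_nonneg _)
    _ = C * ∫ y, |w y| := integral_const_mul C _

lemma g_integrable (ha : Continuous a) (hC : ∀ x, |a x| ≤ C)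
    {w : ℝ → ℝ} (hw : Integrable w) (x : ℝ) :
    Integrable (fun y => a (x - y) * w y) := by
  apply Integrable.mono' (hw.norm.const_mul C)
  · exact ((ha.comp (continuous_const.sub continuous_id)).aestronglyMeasurable.mul
      hw.aestronglyMeasurable)
  · filter_upwards with y
    rw [norm_mul]
    exact mul_le_mul_of_nonneg_right (hC _) (norm_nonneg _)

lemma conv_halfline (ha : Continuous a) (hC : ∀ x, |a x| ≤ C)
    {w : ℝ → ℝ} (hw : Integrable w) (hodd : ∀ y, w (-y) = -w y) (x : ℝ) :
    conv a w x = ∫ y in Ioi 0, (a (x - y) - a (x + y)) * w y := by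
  set g : ℝ → ℝ := fun y => a (x - y) * w y with hg
  have hg_int : Integrable g := g_integrable ha hC hw x
  have split : conv a w x = (∫ y in Iic 0, g y) + ∫ y in Ioi 0, g y :=
    (intervalIntegral.integral_Iic_add_Ioi hg_int.integrableOn hg_int.integrableOn).symm
  have hneg : (∫ y in Iic 0, g y) = ∫ y in Ioi 0, g (-y) := by
    have h := integral_comp_neg_Iic (0 : ℝ) (fun y => g (-y))
    simp only [neg_neg, neg_zero] at h
    exact h
  rw [split, hneg, ← integral_add (hg_int.comp_neg.integrableOn) hg_int.integrableOn]
  congr 1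
  funext y
  have : g (-y) = a (x + y) * (- w y) := by
    simp only [hg, sub_neg_eq_add, hodd y]
  rw [this]
  simp only [hg]
  ring

lemma conv_odd (ha_even : ∀ x, a (-x) = a x)
    {w : ℝ → ℝ} (hodd : ∀ y, w (-y) = -w y) (x : ℝ) :
    conv a w (-x) = - conv a w x := by
  unfold conv
  have h := integral_neg_eq_self (fun y => a (-x - y) * w y) volume
  rw [← h, ← integral_neg]
  congr 1
  funext y
  have h1 : a (-x - -y) = a (x - y) := by
    rw [show (-x - -y) = -(x - y) by ring, ha_even]
  rw [h1, hodd y]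
  ring

variable {a : ℝ → ℝ} {C : ℝ}

lemma g_integrable' (ha : Continuous a) (hC : ∀ x, |a x| ≤ C)
    {w : ℝ → ℝ} (hw : Integrable w) (x : ℝ) :
    Integrable (fun y => a (x + y) * w y) := by
  apply Integrable.mono' (hw.norm.const_mul C)
  · exact ((ha.comp (continuous_const.add continuous_id)).aestronglyMeasurable.mul
      hw.aestronglyMeasurable)
  · filter_upwards with y
    rw [norm_mul]
    exact mul_le_mul_of_nonneg_right (hC _) (norm_nonneg _)

lemma strict_key (hk : KernelHyp a) (hs : StrictKernel a) :
    ∀ x y : ℝ, 0 < x → 0 < y → a (x + y) < a (x - y) := by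
  have hsa : StrictAntiOn a (Set.Ici 0) :=
    strictAntiOn_of_deriv_neg (convex_Ici 0) hs.1.continuous.continuousOn
      (by intro z hz; rw [interior_Ici] at hz; exact hs.2 z hz)
  intro x y hx hy
  have h1 : a (x - y) = a |x - y| := by
    rcases le_or_gt 0 (x - y) with h | h
    · rw [abs_of_nonneg h]
    · rw [abs_of_neg h, hk.even]
  have h2 : |x - y| < x + y := by
    rw [abs_lt]; constructor <;> linarith
  rw [h1]
  exact hsa (mem_Ici.mpr (abs_nonneg _)) (mem_Ici.mpr (by linarith)) h2

lemma Fxi_pos (hk : KernelHyp a) (hs : StrictKernel a) {ξ : ℝ} (hξ : 0 < ξ)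
    {v : ℝ → ℝ} (hv : coneN v)
    (hne : ¬ ((fun x => chi ξ x * v x) =ᵐ[volume] (0 : ℝ → ℝ))) :
    0 < Fxi a ξ v := by
  obtain ⟨C, hC⟩ := hk.bounded
  have ha_cont : Continuous a := hs.1.continuous
  set w : ℝ → ℝ := fun x => chi ξ x * v x with hwdef
  have hw_int : Integrable w := w_integrable hv.1
  have hw_odd : ∀ x, w (-x) = -w x := by
    intro x
    simp only [hwdef, chi_even, hv.2.1 x]
    ring
  have hw_nonpos : ∀ x, 0 < x → w x ≤ 0 := fun x hx =>
    mul_nonpos_of_nonneg_of_nonpos (chi_nonneg _ _) (hv.2.2 x hx)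
  have hv0 : v 0 = 0 := by
    have := hv.2.1 0
    rw [neg_zero] at this
    linarith
  have hw0 : w 0 = 0 := by simp [hwdef, hv0]
  set A : Set ℝ := {x | 0 < x ∧ w x < 0} with hAdef
  have hA : 0 < volume A := by
    by_contra h
    push_neg at h
    have hA0 : volume A = 0 := le_antisymm (by exact le_of_not_gt (by simpa using h)) (by simp)
    apply hne
    have hsub : {x : ℝ | ¬ w x = 0} ⊆ A ∪ (-A) ∪ {0} := by
      intro x hx
      simp only [mem_setOf_eq] at hx
      rcases lt_trichotomy x 0 with hlt | heq | hgt
      · left; right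
        rw [Set.mem_neg, hAdef, mem_setOf_eq]
        refine ⟨by linarith, ?_⟩
        have hne' : w (-x) ≠ 0 := by rw [hw_odd]; simpa using hx
        have := hw_nonpos (-x) (by linarith)
        exact lt_of_le_of_ne this hne'
      · right; simp [heq]
      · left; left
        exact ⟨hgt, lt_of_le_of_ne (hw_nonpos x hgt) hx⟩
    have : volume {x : ℝ | ¬ w x = 0} = 0 := by
      apply measure_mono_null hsub
      rw [measure_union_null_iff]
      constructor
      · rw [measure_union_null_iff]
        exact ⟨hA0, by rwa [Measure.measure_neg]⟩
      · exact measure_singleton 0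
    exact ae_iff.mpr this
  have key := strict_key hk hs
  have hdiff_int : ∀ x : ℝ, Integrable (fun y => (a (x - y) - a (x + y)) * w y) := by
    intro x
    have := (g_integrable ha_cont hC hw_int x).sub (g_integrable' ha_cont hC hw_int x)
    apply this.congr
    filter_upwards with y
    simp only [Pi.sub_apply]
    ring
  have hconv_nonpos : ∀ x, 0 < x → conv a w x ≤ 0 := by
    intro x hx
    rw [conv_halfline ha_cont hC hw_int hw_odd x]
    apply integral_nonpos_of_ae
    apply ae_restrict_of_forall_mem measurableSet_Ioi
    intro y hy
    exact mul_nonpos_of_nonneg_of_nonpos (sub_nonneg.mpr (key x y hx hy).le)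
      (hw_nonpos y hy)
  have hconv_neg : ∀ x ∈ A, conv a w x < 0 := by
    intro x hx
    obtain ⟨hx0, hwx⟩ := hx
    rw [conv_halfline ha_cont hC hw_int hw_odd x]
    have hpos : 0 < ∫ y in Ioi 0, -((a (x - y) - a (x + y)) * w y) := by
      rw [setIntegral_pos_iff_support_of_nonneg_ae]
      · refine hA.trans_le (measure_mono ?_)
        intro y hy
        obtain ⟨hy0, hwy⟩ := hy
        constructor
        · rw [Function.mem_support]
          have h1 : 0 < a (x - y) - a (x + y) := sub_pos.mpr (key x y hx0 hy0)
          have : 0 < -((a (x - y) - a (x + y)) * w y) := by nlinarith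
          exact ne_of_gt this
        · exact hy0
      · apply ae_restrict_of_forall_mem measurableSet_Ioi
        intro y hy
        have h1 : 0 ≤ a (x - y) - a (x + y) := sub_nonneg.mpr (key x y hx0 hy).le
        have h2 : w y ≤ 0 := hw_nonpos y hy
        simp only [Pi.zero_apply]
        nlinarith
      · exact (hdiff_int x).neg.integrableOn
    rw [integral_neg] at hpos
    linarith
  set f : ℝ → ℝ := fun x => w x * conv a w x with hfdef
  have hf_nonneg : ∀ x, 0 ≤ f x := by
    intro x
    rcases lt_trichotomy x 0 with hlt | heq | hgt
    · have h1 := hw_odd (-x)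
      rw [neg_neg] at h1
      have h2 := conv_odd hk.even hw_odd (-x)
      rw [neg_neg] at h2
      have hx' : 0 < -x := by linarith
      have h3 : 0 ≤ w (-x) * conv a w (-x) := by
        nlinarith [hw_nonpos (-x) hx', hconv_nonpos (-x) hx']
      show 0 ≤ w x * conv a w x
      rw [h1, h2, neg_mul_neg]
      exact h3
    · simp [hfdef, heq, hw0]
    · show 0 ≤ w x * conv a w x
      nlinarith [hw_nonpos x hgt, hconv_nonpos x hgt]
  have hf_int : Integrable f := by
    apply Integrable.mono' (hw_int.norm.mul_const (C * ∫ y, |w y|))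
    · exact hw_int.aestronglyMeasurable.mul
        (conv_cont ha_cont hC hw_int).aestronglyMeasurable
    · filter_upwards with x
      rw [norm_mul]
      have := conv_bound hC hw_int x
      calc ‖w x‖ * ‖conv a w x‖ ≤ ‖w x‖ * (C * ∫ y, |w y|) := by
            apply mul_le_mul_of_nonneg_left _ (norm_nonneg _)
            rw [Real.norm_eq_abs]
            exact this
        _ = ‖w x‖ * (C * ∫ y, |w y|) := rfl
  have hpos : 0 < ∫ x, f x := by
    rw [integral_pos_iff_support_of_nonneg hf_nonneg hf_int]
    refine hA.trans_le (measure_mono ?_)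
    intro x hx
    obtain ⟨hx0, hwx⟩ := hx
    rw [Function.mem_support]
    have := hconv_neg x ⟨hx0, hwx⟩
    have : 0 < f x := mul_pos_of_neg_of_neg hwx this
    exact ne_of_gt this
  unfold Fxi
  have : (∫ x, (chi ξ x * v x) * conv a (fun y => chi ξ y * v y) x) = ∫ x, f x := rfl
  rw [this]
  linarith

lemma chi_integrable (ξ : ℝ) : Integrable (chi ξ) := by
  unfold chi
  rw [integrable_indicator_iff measurableSet_Icc]
  exact integrableOn_const (by rw [Real.volume_Icc]; exact ENNReal.ofReal_ne_top)

lemma chi_integral {ξ : ℝ} (hξ : 0 < ξ) : (∫ x, chi ξ x) = 2 * ξ := by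
  unfold chi
  rw [integral_indicator measurableSet_Icc, setIntegral_const, measureReal_def, Real.volume_Icc,
    smul_eq_mul, mul_one, ENNReal.toReal_ofReal (by linarith)]
  ring

/-- For every `ξ ∈ (0,∞)` and every `v ∈ 𝒩` with `χ_ξ·v ≠ 0` in `L²`,
one has `F_ξ(v) > 0`. Consequently the largest eigenvalue `λ_ξ` of `A_ξ` on the odd
functions in `L²(ℝ)` is strictly positive. -/
theorem stmt4 (a : ℝ → ℝ) (hk : KernelHyp a) (hs : StrictKernel a)
    (ξ : ℝ) (hξ : 0 < ξ) :
    (∀ v : ℝ → ℝ, coneN v →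
      ¬ ((fun x => chi ξ x * v x) =ᵐ[volume] (0 : ℝ → ℝ)) → 0 < Fxi a ξ v) ∧
    0 < lamXi a ξ := by
  obtain ⟨C, hC⟩ := hk.bounded
  have hC0 : 0 ≤ C := le_trans (abs_nonneg _) (hC 0)
  have part1 : ∀ v : ℝ → ℝ, coneN v →
      ¬ ((fun x => chi ξ x * v x) =ᵐ[volume] (0 : ℝ → ℝ)) → 0 < Fxi a ξ v :=
    fun v hv hne => Fxi_pos hk hs hξ hv hne
  refine ⟨part1, ?_⟩
  set c : ℝ := (Real.sqrt (2 * ξ))⁻¹ with hcdef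
  set g : ℝ → ℝ := (Set.Ioc (0:ℝ) ξ).indicator (fun _ => (1:ℝ)) with hgdef
  set h : ℝ → ℝ := (Set.Ico (-ξ) (0:ℝ)).indicator (fun _ => (1:ℝ)) with hhdef
  set v₀ : ℝ → ℝ := fun x => c * (h x - g x) with hv₀def
  have hc_pos : 0 < c := inv_pos.mpr (Real.sqrt_pos.mpr (by linarith))
  have hiff1 : ∀ x : ℝ, (-x ∈ Set.Ioc (0:ℝ) ξ) ↔ (x ∈ Set.Ico (-ξ) (0:ℝ)) := by
    intro x
    simp only [Set.mem_Ioc, Set.mem_Ico]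
    constructor <;> (rintro ⟨u1, u2⟩; exact ⟨by linarith, by linarith⟩)
  have hiff2 : ∀ x : ℝ, (-x ∈ Set.Ico (-ξ) (0:ℝ)) ↔ (x ∈ Set.Ioc (0:ℝ) ξ) := by
    intro x
    simp only [Set.mem_Ioc, Set.mem_Ico]
    constructor <;> (rintro ⟨u1, u2⟩; exact ⟨by linarith, by linarith⟩)
  have hgh : ∀ x, g (-x) = h x := by
    intro x
    rw [hgdef, hhdef]
    by_cases hx : x ∈ Set.Ico (-ξ) (0:ℝ)
    · rw [Set.indicator_of_mem ((hiff1 x).mpr hx), Set.indicator_of_mem hx]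
    · rw [Set.indicator_of_notMem (fun hc => hx ((hiff1 x).mp hc)),
        Set.indicator_of_notMem hx]
  have hhg : ∀ x, h (-x) = g x := by
    intro x
    rw [hgdef, hhdef]
    by_cases hx : x ∈ Set.Ioc (0:ℝ) ξ
    · rw [Set.indicator_of_mem ((hiff2 x).mpr hx), Set.indicator_of_mem hx]
    · rw [Set.indicator_of_notMem (fun hc => hx ((hiff2 x).mp hc)),
        Set.indicator_of_notMem hx]
  have hodd : ∀ x, v₀ (-x) = -v₀ x := by
    intro x
    simp only [hv₀def]
    rw [hhg x, hgh x]
    ring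
  have hg_mem : MemLp g 2 volume := by
    rw [hgdef]
    exact memLp_indicator_const 2 measurableSet_Ioc 1
      (Or.inr (by rw [Real.volume_Ioc]; exact ENNReal.ofReal_ne_top))
  have hh_mem : MemLp h 2 volume := by
    rw [hhdef]
    exact memLp_indicator_const 2 measurableSet_Ico 1
      (Or.inr (by rw [Real.volume_Ico]; exact ENNReal.ofReal_ne_top))
  have hv₀_mem : MemLp v₀ 2 volume := by
    have heq : v₀ = fun x => c * ((h - g) x) := by
      funext x; simp [hv₀def, Pi.sub_apply]
    rw [heq]
    exact (hh_mem.sub hg_mem).const_mul c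
  have hg_nonneg : ∀ x, 0 ≤ g x := by
    intro x; rw [hgdef]; exact Set.indicator_nonneg (fun _ _ => zero_le_one) x
  have hv₀_nonpos : ∀ x, 0 < x → v₀ x ≤ 0 := by
    intro x hx
    have hh0 : h x = 0 := by
      rw [hhdef]
      exact Set.indicator_of_notMem (by rw [Set.mem_Ico]; push_neg; intro; linarith) _
    simp only [hv₀def, hh0]
    nlinarith [hg_nonneg x, hc_pos]
  have hconeN : coneN v₀ := ⟨hv₀_mem, hodd, hv₀_nonpos⟩
  have hg_int : Integrable g := by
    rw [hgdef, integrable_indicator_iff measurableSet_Ioc]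
    exact integrableOn_const (by rw [Real.volume_Ioc]; exact ENNReal.ofReal_ne_top)
  have hh_int : Integrable h := by
    rw [hhdef, integrable_indicator_iff measurableSet_Ico]
    exact integrableOn_const (by rw [Real.volume_Ico]; exact ENNReal.ofReal_ne_top)
  have hint_g : (∫ x, g x) = ξ := by
    rw [hgdef, integral_indicator measurableSet_Ioc, setIntegral_const, measureReal_def, Real.volume_Ioc,
      smul_eq_mul, mul_one, ENNReal.toReal_ofReal (by linarith)]
    ring
  have hint_h : (∫ x, h x) = ξ := by
    rw [hhdef, integral_indicator measurableSet_Ico, setIntegral_const, measureReal_def, Real.volume_Ico,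
      smul_eq_mul, mul_one, ENNReal.toReal_ofReal (by linarith)]
    ring
  have hnorm : (∫ x, (v₀ x) ^ 2) = 1 := by
    have hpt : ∀ x, (v₀ x) ^ 2 = c ^ 2 * (h x + g x) := by
      intro x
      by_cases h1 : x ∈ Set.Ico (-ξ) (0:ℝ) <;> by_cases h2 : x ∈ Set.Ioc (0:ℝ) ξ
      · exfalso
        rw [Set.mem_Ico] at h1; rw [Set.mem_Ioc] at h2
        linarith [h1.2, h2.1]
      · simp only [hv₀def, hgdef, hhdef, Set.indicator_of_mem h1, Set.indicator_of_notMem h2]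
        ring
      · simp only [hv₀def, hgdef, hhdef, Set.indicator_of_notMem h1, Set.indicator_of_mem h2]
        ring
      · simp only [hv₀def, hgdef, hhdef, Set.indicator_of_notMem h1, Set.indicator_of_notMem h2]
        ring
    have hc2 : c ^ 2 = (2 * ξ)⁻¹ := by
      rw [hcdef, inv_pow, Real.sq_sqrt (by linarith)]
    calc (∫ x, (v₀ x) ^ 2) = ∫ x, c ^ 2 * (h x + g x) := by
          congr 1; funext x; exact hpt x
      _ = c ^ 2 * ∫ x, (h x + g x) := integral_const_mul _ _
      _ = c ^ 2 * ((∫ x, h x) + ∫ x, g x) := by rw [integral_add hh_int hg_int]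
      _ = (2 * ξ)⁻¹ * (2 * ξ) := by rw [hint_h, hint_g, hc2]; ring_nf
      _ = 1 := inv_mul_cancel₀ (by linarith)
  have hne : ¬ ((fun x => chi ξ x * v₀ x) =ᵐ[volume] (0 : ℝ → ℝ)) := by
    intro heq
    have heq' : ∀ᵐ x, chi ξ x * v₀ x = 0 := by
      filter_upwards [heq] with x hx using hx
    have h0 : volume {x : ℝ | ¬ (chi ξ x * v₀ x = 0)} = 0 := ae_iff.mp heq'
    have hsub : Set.Ioc (0:ℝ) ξ ⊆ {x : ℝ | ¬ (chi ξ x * v₀ x = 0)} := by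
      intro x hx
      rw [Set.mem_Ioc] at hx
      have hchi : chi ξ x = 1 := by
        unfold chi
        exact Set.indicator_of_mem (by rw [Set.mem_Icc]; exact ⟨by linarith, hx.2⟩) _
      have hgx : g x = 1 := by
        rw [hgdef]; exact Set.indicator_of_mem (by rw [Set.mem_Ioc]; exact hx) _
      have hhx : h x = 0 := by
        rw [hhdef]
        exact Set.indicator_of_notMem (by rw [Set.mem_Ico]; push_neg; intro; linarith) _
      simp only [Set.mem_setOf_eq, hchi, one_mul, hv₀def, hhx, hgx]
      intro hcon
      nlinarith
    have := measure_mono_null hsub h0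
    rw [Real.volume_Ioc, ENNReal.ofReal_eq_zero] at this
    linarith
  have hF : 0 < Fxi a ξ v₀ := part1 v₀ hconeN hne
  have hmem : 2 * Fxi a ξ v₀ ∈ rayleighSet a ξ := ⟨v₀, hv₀_mem, hodd, hnorm, rfl⟩
  have hbdd : BddAbove (rayleighSet a ξ) := by
    refine ⟨C * (ξ + 1/2) * (ξ + 1/2), ?_⟩
    rintro l ⟨v, hv2, hvodd, hvnorm, rfl⟩
    set w : ℝ → ℝ := fun x => chi ξ x * v x with hwdef
    have hw_int : Integrable w := w_integrable hv2
    have hsq_int : Integrable (fun x => (v x) ^ 2) := hv2.integrable_sq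
    have hK : (∫ x, |w x|) ≤ ξ + 1/2 := by
      have hle : ∀ x, |w x| ≤ (chi ξ x + (v x) ^ 2) / 2 := by
        intro x
        have h1 : |w x| = chi ξ x * |v x| := by
          rw [hwdef]
          simp only
          rw [abs_mul, abs_of_nonneg (chi_nonneg _ _)]
        rw [h1]
        nlinarith [sq_nonneg (chi ξ x - |v x|), sq_abs (v x), chi_nonneg ξ x,
          chi_le_one ξ x, abs_nonneg (v x), sq_nonneg (v x)]
      calc (∫ x, |w x|) ≤ ∫ x, (chi ξ x + (v x) ^ 2) / 2 :=
            integral_mono_of_nonneg (Eventually.of_forall fun x => abs_nonneg _)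
              (((chi_integrable ξ).add hsq_int).div_const 2) (Eventually.of_forall hle)
        _ = ((∫ x, chi ξ x) + ∫ x, (v x) ^ 2) / 2 := by
            rw [integral_div, integral_add (chi_integrable ξ) hsq_int]
        _ = (2 * ξ + 1) / 2 := by rw [chi_integral hξ, hvnorm]
        _ = ξ + 1/2 := by ring
    have hKnn : 0 ≤ ∫ x, |w x| := integral_nonneg fun x => abs_nonneg _
    have h1 : 2 * Fxi a ξ v = ∫ x, w x * conv a w x := by
      unfold Fxi
      rw [hwdef]
      ring
    rw [h1]
    calc (∫ x, w x * conv a w x) ≤ ∫ x, |w x * conv a w x| := by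
          refine le_trans (le_abs_self _) ?_
          have := norm_integral_le_integral_norm (μ := volume) (fun x => w x * conv a w x)
          simpa only [Real.norm_eq_abs] using this
      _ ≤ ∫ x, |w x| * (C * (ξ + 1/2)) := by
          apply integral_mono_of_nonneg (Eventually.of_forall fun x => abs_nonneg _)
            (hw_int.norm.mul_const _)
          filter_upwards with x
          rw [abs_mul]
          calc |w x| * |conv a w x| ≤ |w x| * (C * ∫ y, |w y|) :=
                mul_le_mul_of_nonneg_left (conv_bound hC hw_int x) (abs_nonneg _)
            _ ≤ |w x| * (C * (ξ + 1/2)) := by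
                apply mul_le_mul_of_nonneg_left _ (abs_nonneg _)
                exact mul_le_mul_of_nonneg_left hK hC0
      _ = (∫ x, |w x|) * (C * (ξ + 1/2)) := integral_mul_const _ _
      _ ≤ (ξ + 1/2) * (C * (ξ + 1/2)) :=
          mul_le_mul_of_nonneg_right hK (by positivity)
      _ = C * (ξ + 1/2) * (ξ + 1/2) := by ring
  have h2F : 0 < 2 * Fxi a ξ v₀ := by linarith
  exact lt_of_lt_of_le h2F (le_csSup hbdd hmem)
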